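/- (The central unitary extension.) Let H0 be a complex Hilbert space, D, D* closed subspaces, V : D → D* a surjective linear isometry, Δ = H0 ⊖ D, Δ* = H0 ⊖ D*. On K0 = H0 ⊕ ℓ²(ℕ, Δ) ⊕ ℓ²(ℕ, Δ*) define W(h, x, y) = (V(P_D h) + y(0), (P_Δ h)·e0 + S x, S* y), where S is the unilateral forward shift, S* the backward shift, and (P_Δ h)·e0 denotes the sequence supported at index 0 with value P_Δ h. Then: (i) W is a unitary operator on K0; (ii) W(d, 0, 0) = (V d, 0, 0) for all d ∈ D, so W extends V; (iii) W is a minimal unitary extension of V, i.e. the smallest closed subspace of K0 containing H0 ⊕ {0} ⊕ {0} and invariant for both W and W* is all of K0; (iv) W maps the subspace {(δ, 0, 0) : δ ∈ Δ} onto {(0, δ·e0, 0) : δ ∈ Δ} and maps {(0, 0, δ*·e0) : δ* ∈ Δ*} onto {(δ*, 0, 0) : δ* ∈ Δ*}. -/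

import Mathlib

open ContinuousLinearMap

open scoped ENNReal

section Aux
variable {E : Type*} [NormedAddCommGroup E]

private lemma ennreal_rpow_two (x : ℝ) : x ^ ((2 : ℝ≥0∞).toReal) = x ^ 2 := by
  rw [show ((2:ℝ≥0∞).toReal) = ((2:ℕ):ℝ) by norm_num, Real.rpow_natCast]

lemma lp_summable_sq (f : lp (fun _ : ℕ => E) 2) :
    Summable fun n => ‖f n‖ ^ 2 := by
  have := (lp.memℓp f).summable (p := 2) (by norm_num)
  simpa [ennreal_rpow_two] using this

lemma lp_norm_sq (f : lp (fun _ : ℕ => E) 2) : ‖f‖ ^ 2 = ∑' n, ‖f n‖ ^ 2 := by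
  have h := lp.norm_rpow_eq_tsum (p := 2) (by norm_num) f
  simpa [ennreal_rpow_two] using h

lemma lp_norm_sq_split (f : lp (fun _ : ℕ => E) 2) :
    ‖f‖ ^ 2 = ‖f 0‖ ^ 2 + ∑' n, ‖f (n + 1)‖ ^ 2 := by
  rw [lp_norm_sq]
  exact (lp_summable_sq f).tsum_eq_zero_add

lemma memℓp_tail (f : lp (fun _ : ℕ => E) 2) :
    Memℓp (fun n => f (n + 1) : ∀ _ : ℕ, E) 2 := by
  apply memℓp_gen
  simp only [ennreal_rpow_two]
  exact (summable_nat_add_iff 1).2 (lp_summable_sq f)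

/-- prepend an element to a sequence -/
def consSeq (a : E) (f : ℕ → E) : ∀ _ : ℕ, E := fun n => Nat.casesOn n a f

@[simp] lemma consSeq_zero (a : E) (f : ℕ → E) : consSeq a f 0 = a := rfl
@[simp] lemma consSeq_succ (a : E) (f : ℕ → E) (n : ℕ) : consSeq a f (n + 1) = f n := rfl

lemma memℓp_cons (a : E) (f : lp (fun _ : ℕ => E) 2) :
    Memℓp (consSeq a (fun n => f n)) 2 := by
  apply memℓp_gen
  simp only [ennreal_rpow_two]
  apply (summable_nat_add_iff 1).1
  simpa using lp_summable_sq f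

end Aux

set_option maxHeartbeats 1000000 in
/-- **The central unitary extension.**
Let `V : D → D*` be a surjective linear isometry between closed subspaces of a Hilbert
space `H0`, `Δ = H0 ⊖ D`, `Δ* = H0 ⊖ D*`.  On `K0 = H0 ⊕ ℓ²(ℕ,Δ) ⊕ ℓ²(ℕ,Δ*)` the operator
`W(h, x, y) = (V(P_D h) + y(0), (P_Δ h)·e₀ + Sx, S*y)` is a unitary operator, extends `V`,
is a minimal unitary extension of `V`, and maps `{(δ,0,0)}` onto `{(0, δ·e₀, 0)}` and
`{(0,0,δ*·e₀)}` onto `{(δ*,0,0)}`. -/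
theorem stmt_15 {H0 : Type*}
    [NormedAddCommGroup H0] [InnerProductSpace ℂ H0] [CompleteSpace H0]
    (D Dst : Submodule ℂ H0) [CompleteSpace D] [CompleteSpace Dst]
    (V : D ≃ₗᵢ[ℂ] Dst)
    (W : (H0 × lp (fun _ : ℕ => Dᗮ) 2 × lp (fun _ : ℕ => Dstᗮ) 2) →L[ℂ]
         (H0 × lp (fun _ : ℕ => Dᗮ) 2 × lp (fun _ : ℕ => Dstᗮ) 2))
    (hW : ∀ p : H0 × lp (fun _ : ℕ => Dᗮ) 2 × lp (fun _ : ℕ => Dstᗮ) 2,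
      (W p).1 = ((V (D.orthogonalProjectionOnto p.1) : Dst) : H0) + ((p.2.2 0 : Dstᗮ) : H0) ∧
      (W p).2.1 0 = Dᗮ.orthogonalProjectionOnto p.1 ∧
      (∀ n : ℕ, (W p).2.1 (n + 1) = p.2.1 n) ∧
      (∀ n : ℕ, (W p).2.2 n = p.2.2 (n + 1))) :
    -- (i) `W` is a unitary operator on `K0`
    ((∀ p : H0 × lp (fun _ : ℕ => Dᗮ) 2 × lp (fun _ : ℕ => Dstᗮ) 2,
        ‖(W p).1‖ ^ 2 + ‖(W p).2.1‖ ^ 2 + ‖(W p).2.2‖ ^ 2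
          = ‖p.1‖ ^ 2 + ‖p.2.1‖ ^ 2 + ‖p.2.2‖ ^ 2) ∧
      Function.Surjective W) ∧
    -- (ii) `W` extends `V`
    (∀ d : D, W ((d : H0), 0, 0) = (((V d : Dst) : H0), 0, 0)) ∧
    -- (iii) `W` is a minimal unitary extension of `V`
    (∀ S : Submodule ℂ (H0 × lp (fun _ : ℕ => Dᗮ) 2 × lp (fun _ : ℕ => Dstᗮ) 2),
        IsClosed (S : Set (H0 × lp (fun _ : ℕ => Dᗮ) 2 × lp (fun _ : ℕ => Dstᗮ) 2)) →
        (∀ h : H0, (h, (0 : lp (fun _ : ℕ => Dᗮ) 2), (0 : lp (fun _ : ℕ => Dstᗮ) 2)) ∈ S) →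
        (∀ p ∈ S, W p ∈ S) →
        (∀ p, W p ∈ S → p ∈ S) →
        S = ⊤) ∧
    -- (iv) the subspace identities
    (W '' {p : H0 × lp (fun _ : ℕ => Dᗮ) 2 × lp (fun _ : ℕ => Dstᗮ) 2 |
          ∃ δ : Dᗮ, p = ((δ : H0), 0, 0)}
        = {p : H0 × lp (fun _ : ℕ => Dᗮ) 2 × lp (fun _ : ℕ => Dstᗮ) 2 |
          ∃ δ : Dᗮ, p = (0, (lp.single 2 0 δ : lp (fun _ : ℕ => Dᗮ) 2), 0)} ∧
      W '' {p : H0 × lp (fun _ : ℕ => Dᗮ) 2 × lp (fun _ : ℕ => Dstᗮ) 2 |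
          ∃ ε : Dstᗮ, p = (0, 0, (lp.single 2 0 ε : lp (fun _ : ℕ => Dstᗮ) 2))}
        = {p : H0 × lp (fun _ : ℕ => Dᗮ) 2 × lp (fun _ : ℕ => Dstᗮ) 2 |
          ∃ ε : Dstᗮ, p = ((ε : H0), 0, 0)}) := by
  -- extensionality for the triple product
  have ext3 : ∀ q q' : H0 × lp (fun _ : ℕ => Dᗮ) 2 × lp (fun _ : ℕ => Dstᗮ) 2,
      q.1 = q'.1 → (∀ n, q.2.1 n = q'.2.1 n) → (∀ n, q.2.2 n = q'.2.2 n) → q = q' := by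
    rintro ⟨a, b, c⟩ ⟨a', b', c'⟩ h1 h2 h3
    simp only [Prod.mk.injEq]
    exact ⟨h1, lp.ext (funext h2), lp.ext (funext h3)⟩
  -- computation A
  have hA : ∀ δ : Dᗮ, W ((δ : H0), 0, 0) = ((0 : H0), (lp.single 2 0 δ : lp (fun _ : ℕ => Dᗮ) 2), (0 : lp (fun _ : ℕ => Dstᗮ) 2)) := by
    intro δ
    obtain ⟨h1, h2, h3, h4⟩ := hW ((δ : H0), 0, 0)
    refine ext3 _ _ ?_ ?_ ?_
    · rw [h1]
      simp [Submodule.orthogonalProjectionOnto_apply_of_mem_orthogonal δ.2]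
    · intro n
      cases n with
      | zero =>
        rw [h2]
        simp [Submodule.orthogonalProjectionOnto_mem_subspace_eq_self, lp.single_apply_self]
      | succ n =>
        rw [h3]
        simp [lp.single_apply_ne _ _ _ (Nat.succ_ne_zero n)]
    · intro n; rw [h4]; simp
  -- computation B
  have hB : ∀ ε : Dstᗮ, W ((0 : H0), (0 : lp (fun _ : ℕ => Dᗮ) 2), (lp.single 2 0 ε : lp (fun _ : ℕ => Dstᗮ) 2)) = ((ε : H0), 0, 0) := by
    intro ε
    obtain ⟨h1, h2, h3, h4⟩ := hW ((0 : H0), (0 : lp (fun _ : ℕ => Dᗮ) 2), (lp.single 2 0 ε : lp (fun _ : ℕ => Dstᗮ) 2))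
    refine ext3 _ _ ?_ ?_ ?_
    · rw [h1]; simp [lp.single_apply_self]
    · intro n
      cases n with
      | zero => rw [h2]; simp
      | succ n => rw [h3]; simp
    · intro n; rw [h4]; simp [lp.single_apply_ne _ _ _ (Nat.succ_ne_zero n)]
  -- computation C
  have hC : ∀ (n : ℕ) (δ : Dᗮ),
      W ((0 : H0), (lp.single 2 n δ : lp (fun _ : ℕ => Dᗮ) 2), (0 : lp (fun _ : ℕ => Dstᗮ) 2))
        = ((0 : H0), (lp.single 2 (n + 1) δ : lp (fun _ : ℕ => Dᗮ) 2), (0 : lp (fun _ : ℕ => Dstᗮ) 2)) := by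
    intro n δ
    obtain ⟨h1, h2, h3, h4⟩ := hW ((0 : H0), (lp.single 2 n δ : lp (fun _ : ℕ => Dᗮ) 2), (0 : lp (fun _ : ℕ => Dstᗮ) 2))
    refine ext3 _ _ ?_ ?_ ?_
    · rw [h1]; simp
    · intro k
      cases k with
      | zero =>
        rw [h2]
        simp [lp.single_apply]
      | succ k =>
        rw [h3]
        rcases eq_or_ne k n with rfl | hk
        · simp [lp.single_apply_self]
        · rw [lp.single_apply_ne _ _ _ hk,
            lp.single_apply_ne _ _ _ (fun h => hk (Nat.succ_injective h))]
    · intro k; rw [h4]; simp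
  -- computation D
  have hD : ∀ (n : ℕ) (ε : Dstᗮ),
      W ((0 : H0), (0 : lp (fun _ : ℕ => Dᗮ) 2), (lp.single 2 (n + 1) ε : lp (fun _ : ℕ => Dstᗮ) 2))
        = ((0 : H0), (0 : lp (fun _ : ℕ => Dᗮ) 2), (lp.single 2 n ε : lp (fun _ : ℕ => Dstᗮ) 2)) := by
    intro n ε
    obtain ⟨h1, h2, h3, h4⟩ := hW ((0 : H0), (0 : lp (fun _ : ℕ => Dᗮ) 2), (lp.single 2 (n + 1) ε : lp (fun _ : ℕ => Dstᗮ) 2))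
    refine ext3 _ _ ?_ ?_ ?_
    · rw [h1]; simp [lp.single_apply_ne _ _ _ (Nat.succ_ne_zero n).symm]
    · intro k
      cases k with
      | zero => rw [h2]; simp
      | succ k => rw [h3]; simp
    · intro k
      rw [h4]
      rcases eq_or_ne k n with rfl | hk
      · simp [lp.single_apply_self]
      · rw [lp.single_apply_ne _ _ _ (fun h => hk (Nat.succ_injective h)),
          lp.single_apply_ne _ _ _ hk]
  -- computation E
  have hE : ∀ d : D, W ((d : H0), 0, 0) = (((V d : Dst) : H0), 0, 0) := by
    intro d
    obtain ⟨h1, h2, h3, h4⟩ := hW ((d : H0), 0, 0)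
    refine ext3 _ _ ?_ ?_ ?_
    · rw [h1]; simp [Submodule.orthogonalProjectionOnto_mem_subspace_eq_self]
    · intro n
      cases n with
      | zero =>
        rw [h2]
        simp [Submodule.orthogonalProjectionOnto_orthogonal_apply_eq_zero d.2]
      | succ n => rw [h3]; simp
    · intro n; rw [h4]; simp
  refine ⟨⟨?_, ?_⟩, hE, ?_, ?_, ?_⟩
  · -- norm identity
    intro p
    obtain ⟨h1, h2, h3, h4⟩ := hW p
    have hinner : (inner ℂ ((V (D.orthogonalProjectionOnto p.1) : Dst) : H0)
        ((p.2.2 0 : Dstᗮ) : H0) : ℂ) = 0 :=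
      Submodule.inner_right_of_mem_orthogonal (Submodule.coe_mem _) (Submodule.coe_mem _)
    have e1 : ‖(W p).1‖ ^ 2 = ‖D.orthogonalProjectionOnto p.1‖ ^ 2 + ‖p.2.2 0‖ ^ 2 := by
      rw [h1, pow_two, pow_two, pow_two,
        norm_add_sq_eq_norm_sq_add_norm_sq_of_inner_eq_zero _ _ hinner]
      simp only [Submodule.norm_coe, LinearIsometryEquiv.norm_map]
    have e2 : ‖(W p).2.1‖ ^ 2 = ‖Dᗮ.orthogonalProjectionOnto p.1‖ ^ 2 + ‖p.2.1‖ ^ 2 := by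
      rw [lp_norm_sq_split ((W p).2.1), lp_norm_sq p.2.1, h2]
      exact congrArg (fun t => ‖Dᗮ.orthogonalProjectionOnto p.1‖ ^ 2 + t)
        (tsum_congr fun n => by rw [h3 n])
    have e3 : ‖p.2.2‖ ^ 2 = ‖p.2.2 0‖ ^ 2 + ‖(W p).2.2‖ ^ 2 := by
      rw [lp_norm_sq_split p.2.2, lp_norm_sq ((W p).2.2)]
      exact congrArg (fun t => ‖p.2.2 0‖ ^ 2 + t)
        ((tsum_congr fun n => by rw [h4 n]).symm)
    have e4 : ‖p.1‖ ^ 2 = ‖D.orthogonalProjectionOnto p.1‖ ^ 2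
        + ‖Dᗮ.orthogonalProjectionOnto p.1‖ ^ 2 := Submodule.norm_sq_eq_add_norm_sq_projection p.1 D
    linarith
  · -- surjectivity
    rintro ⟨k, u, v⟩
    set a : D := V.symm (Dst.orthogonalProjectionOnto k) with ha
    refine ⟨((a : H0) + ((u 0 : Dᗮ) : H0),
      ⟨fun n => u (n + 1), memℓp_tail u⟩,
      ⟨consSeq (Dstᗮ.orthogonalProjectionOnto k) (fun n => v n), memℓp_cons _ v⟩), ?_⟩
    obtain ⟨h1, h2, h3, h4⟩ := hW ((a : H0) + ((u 0 : Dᗮ) : H0),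
      ⟨fun n => u (n + 1), memℓp_tail u⟩,
      ⟨consSeq (Dstᗮ.orthogonalProjectionOnto k) (fun n => v n), memℓp_cons _ v⟩)
    have hPD : D.orthogonalProjectionOnto ((a : H0) + ((u 0 : Dᗮ) : H0)) = a := by
      rw [map_add, Submodule.orthogonalProjectionOnto_mem_subspace_eq_self,
        Submodule.orthogonalProjectionOnto_apply_of_mem_orthogonal (u 0).2, add_zero]
    have hPDp : Dᗮ.orthogonalProjectionOnto ((a : H0) + ((u 0 : Dᗮ) : H0)) = u 0 := by
      rw [map_add, Submodule.orthogonalProjectionOnto_mem_subspace_eq_self,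
        Submodule.orthogonalProjectionOnto_orthogonal_apply_eq_zero a.2, zero_add]
    refine ext3 _ _ ?_ ?_ ?_
    · rw [h1, hPD]
      show ((V (V.symm (Dst.orthogonalProjectionOnto k)) : Dst) : H0)
        + ((Dstᗮ.orthogonalProjectionOnto k : Dstᗮ) : H0) = k
      rw [V.apply_symm_apply]
      exact Dst.starProjection_add_starProjection_orthogonal k
    · intro n
      cases n with
      | zero => rw [h2, hPDp]
      | succ n => exact h3 n
    · intro n; exact h4 n
  · -- minimality
    intro S hSclosed hSH0 hfwd hbwd
    have hsingD : ∀ (n : ℕ) (δ : Dᗮ),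
        ((0 : H0), lp.single 2 n δ, (0 : lp (fun _ : ℕ => Dstᗮ) 2)) ∈ S := by
      intro n
      induction n with
      | zero => intro δ; have := hfwd _ (hSH0 (δ : H0)); rwa [hA δ] at this
      | succ n ih => intro δ; have := hfwd _ (ih δ); rwa [hC n δ] at this
    have hsingDst : ∀ (n : ℕ) (ε : Dstᗮ),
        ((0 : H0), (0 : lp (fun _ : ℕ => Dᗮ) 2), lp.single 2 n ε) ∈ S := by
      intro n
      induction n with
      | zero => intro ε; exact hbwd _ (by rw [hB ε]; exact hSH0 (ε : H0))
      | succ n ih => intro ε; exact hbwd _ (by rw [hD n ε]; exact ih ε)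
    have hx : ∀ x : lp (fun _ : ℕ => Dᗮ) 2,
        ((0 : H0), x, (0 : lp (fun _ : ℕ => Dstᗮ) 2)) ∈ S := by
      intro x
      have hsum : HasSum (fun n : ℕ =>
          ((0 : H0), lp.single 2 n (x n), (0 : lp (fun _ : ℕ => Dstᗮ) 2)))
          ((0 : H0), x, (0 : lp (fun _ : ℕ => Dstᗮ) 2)) :=
        hasSum_zero.prodMk ((lp.hasSum_single (by norm_num) x).prodMk hasSum_zero)
      exact hSclosed.mem_of_tendsto hsum (Filter.Eventually.of_forall fun s =>
        Submodule.sum_mem S fun n _ => hsingD n (x n))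
    have hy : ∀ y : lp (fun _ : ℕ => Dstᗮ) 2,
        ((0 : H0), (0 : lp (fun _ : ℕ => Dᗮ) 2), y) ∈ S := by
      intro y
      have hsum : HasSum (fun n : ℕ =>
          ((0 : H0), (0 : lp (fun _ : ℕ => Dᗮ) 2), lp.single 2 n (y n)))
          ((0 : H0), (0 : lp (fun _ : ℕ => Dᗮ) 2), y) :=
        hasSum_zero.prodMk (hasSum_zero.prodMk (lp.hasSum_single (by norm_num) y))
      exact hSclosed.mem_of_tendsto hsum (Filter.Eventually.of_forall fun s =>
        Submodule.sum_mem S fun n _ => hsingDst n (y n))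
    rw [Submodule.eq_top_iff']
    rintro ⟨h, x, y⟩
    have : ((h, x, y) : H0 × lp (fun _ : ℕ => Dᗮ) 2 × lp (fun _ : ℕ => Dstᗮ) 2)
        = (h, 0, 0) + (0, x, 0) + (0, 0, y) := by
      simp [Prod.ext_iff]
    rw [this]
    exact S.add_mem (S.add_mem (hSH0 h) (hx x)) (hy y)
  · -- image identity 1
    ext q
    constructor
    · rintro ⟨p, ⟨δ, rfl⟩, rfl⟩
      exact ⟨δ, hA δ⟩
    · rintro ⟨δ, rfl⟩
      exact ⟨((δ : H0), 0, 0), ⟨δ, rfl⟩, (hA δ)⟩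
  · -- image identity 2
    ext q
    constructor
    · rintro ⟨p, ⟨ε, rfl⟩, rfl⟩
      exact ⟨ε, hB ε⟩
    · rintro ⟨ε, rfl⟩
      exact ⟨((0 : H0), (0 : lp (fun _ : ℕ => Dᗮ) 2), (lp.single 2 0 ε : lp (fun _ : ℕ => Dstᗮ) 2)), ⟨ε, rfl⟩, (hB ε)⟩
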